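/- arXiv:2402.01058 — 2 statements merged into one kernel-verified Lean document; each statement's English description precedes it below -/
import Mathlib

section
/- Let g_1 : ℝ → [0,1] be defined by g_1(x) = 2x for x ∈ [0,1/2), g_1(x) = 2-2x for x ∈ [1/2,1], and g_1(x) = 0 otherwise, and define g_{k+1} = g_1 ∘ g_k. Define f_k : [0,1] → [0,1] by f_k(x) = ((2n+1)/2^k)·x − (n²+n)/2^{2k} for x ∈ [n/2^k, (n+1)/2^k) with n ∈ {0,1,...,2^k−1}, and f_k(1) = 1. Then for all k ∈ ℕ and x ∈ [0,1], f_k(x) = x − ∑_{j=1}^{k} 2^{−2j} g_j(x), and |x² − f_k(x)| ≤ 2^{−2k−2}. -/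
lemma gk_one (g : ℕ → ℝ → ℝ)
    (hg₁ : ∀ x : ℝ, g 1 x =
      if x ∈ Set.Ico (0:ℝ) (1/2) then 2*x
      else if x ∈ Set.Icc (1/2 : ℝ) 1 then 2 - 2*x
      else 0)
    (hg : ∀ k : ℕ, 1 ≤ k → ∀ x : ℝ, g (k+1) x = g 1 (g k x)) :
    ∀ k : ℕ, 1 ≤ k → g k 1 = 0 := by
  have h10 : g 1 (0:ℝ) = 0 := by rw [hg₁]; norm_num
  have h11 : g 1 (1:ℝ) = 0 := by rw [hg₁]; norm_num
  intro k hk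
  induction k with
  | zero => omega
  | succ k ih =>
    rcases Nat.eq_or_lt_of_le hk with h | h
    · simpa [← h] using h11
    · have hk1 : 1 ≤ k := by omega
      rw [hg k hk1, ih hk1, h10]

lemma gform (g : ℕ → ℝ → ℝ)
    (hg₁ : ∀ x : ℝ, g 1 x =
      if x ∈ Set.Ico (0:ℝ) (1/2) then 2*x
      else if x ∈ Set.Icc (1/2 : ℝ) 1 then 2 - 2*x
      else 0)
    (hg : ∀ k : ℕ, 1 ≤ k → ∀ x : ℝ, g (k+1) x = g 1 (g k x)) :
    ∀ k : ℕ, 1 ≤ k → ∀ n : ℕ, n < 2^k → ∀ x : ℝ,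
      (n : ℝ) ≤ 2^k * x → 2^k * x < (n : ℝ) + 1 →
      g k x = if Even n then 2^k * x - n else (n : ℝ) + 1 - 2^k * x := by
  intro k
  induction k with
  | zero => omega
  | succ k ih =>
    intro _ n hn x hx1 hx2
    rcases Nat.eq_zero_or_pos k with rfl | hk
    · -- base case k+1 = 1
      norm_num at hn hx1 hx2 ⊢
      interval_cases n
      · norm_num at hx1 hx2 ⊢
        rw [hg₁]
        have hm : x ∈ Set.Ico (0:ℝ) (1/2) := by
          constructor <;> linarith
        simp only [hm, if_pos]
      · norm_num at hx1 hx2 ⊢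
        rw [hg₁]
        have h1 : ¬ (x ∈ Set.Ico (0:ℝ) (1/2)) := by
          simp only [Set.mem_Ico, not_and, not_lt]
          intro _; linarith
        have h2 : x ∈ Set.Icc (1/2:ℝ) 1 := by
          constructor <;> linarith
        simp only [h1, h2, if_false, if_true]
    · -- inductive step
      have hk1 : 1 ≤ k := hk
      set c : ℝ := 2^k with hc
      have hcpos : (0:ℝ) < c := by positivity
      have h2c : (2:ℝ)^(k+1) = 2*c := by rw [hc, pow_succ]; ring
      rw [h2c] at hx1 hx2 ⊢
      set p := n / 2 with hpdef
      have hp2 : n = 2*p ∨ n = 2*p + 1 := by omega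
      have hplt : p < 2^k := by
        have h' : n < 2^(k+1) := hn
        rw [pow_succ] at h'; omega
      have hy1 : (p:ℝ) ≤ c * x := by
        rcases hp2 with h | h
        · have hnr : (n:ℝ) = 2*p := by exact_mod_cast congrArg (Nat.cast : ℕ → ℝ) h
          push_cast at hnr; linarith
        · have hnr : (n:ℝ) = 2*p+1 := by exact_mod_cast congrArg (Nat.cast : ℕ → ℝ) h
          push_cast at hnr; linarith
      have hy2 : c * x < (p:ℝ) + 1 := by
        rcases hp2 with h | h
        · have hnr : (n:ℝ) = 2*p := by exact_mod_cast congrArg (Nat.cast : ℕ → ℝ) h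
          push_cast at hnr; linarith
        · have hnr : (n:ℝ) = 2*p+1 := by exact_mod_cast congrArg (Nat.cast : ℕ → ℝ) h
          push_cast at hnr; linarith
      have hgk := ih hk1 p hplt x hy1 hy2
      rw [hg k hk1, hgk, hg₁]
      rcases Nat.even_or_odd p with hpe | hpo
      · rw [if_pos hpe]
        rcases hp2 with h | h
        · -- n = 2p, t = c*x - p ∈ [0, 1/2)
          have hnr : (n:ℝ) = 2*p := by exact_mod_cast congrArg (Nat.cast : ℕ → ℝ) h
          have hne : Even n := by rw [h]; exact even_two_mul p
          rw [if_pos hne]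
          have ht : c*x - p ∈ Set.Ico (0:ℝ) (1/2) := by
            constructor <;> linarith
          rw [if_pos ht]; linarith
        · -- n = 2p+1, t ∈ [1/2, 1)
          have hnr : (n:ℝ) = 2*p+1 := by exact_mod_cast congrArg (Nat.cast : ℕ → ℝ) h
          have hno : ¬ Even n := by rw [h]; simp [parity_simps]
          rw [if_neg hno]
          have ht1 : ¬ (c*x - p ∈ Set.Ico (0:ℝ) (1/2)) := by
            simp only [Set.mem_Ico, not_and, not_lt]; intro _; linarith
          have ht2 : c*x - p ∈ Set.Icc (1/2:ℝ) 1 := by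
            constructor <;> linarith
          rw [if_neg ht1, if_pos ht2]; linarith
      · rw [if_neg (Nat.not_even_iff_odd.mpr hpo)]
        rcases hp2 with h | h
        · -- n = 2p, t = p+1-c*x ∈ (1/2, 1]
          have hnr : (n:ℝ) = 2*p := by exact_mod_cast congrArg (Nat.cast : ℕ → ℝ) h
          have hne : Even n := by rw [h]; exact even_two_mul p
          rw [if_pos hne]
          have ht1 : ¬ ((p:ℝ)+1-c*x ∈ Set.Ico (0:ℝ) (1/2)) := by
            simp only [Set.mem_Ico, not_and, not_lt]; intro _; linarith
          have ht2 : (p:ℝ)+1-c*x ∈ Set.Icc (1/2:ℝ) 1 := by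
            constructor <;> linarith
          rw [if_neg ht1, if_pos ht2]; linarith
        · -- n = 2p+1, t = p+1-c*x ∈ (0, 1/2]
          have hnr : (n:ℝ) = 2*p+1 := by exact_mod_cast congrArg (Nat.cast : ℕ → ℝ) h
          have hno : ¬ Even n := by rw [h]; simp [parity_simps]
          rw [if_neg hno]
          rcases lt_or_ge ((p:ℝ)+1-c*x) (1/2) with hlt | hge
          · have ht : (p:ℝ)+1-c*x ∈ Set.Ico (0:ℝ) (1/2) := by
              constructor <;> linarith
            rw [if_pos ht]; linarith
          · have ht1 : ¬ ((p:ℝ)+1-c*x ∈ Set.Ico (0:ℝ) (1/2)) := by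
              simp only [Set.mem_Ico, not_and, not_lt]; intro _; linarith
            have ht2 : (p:ℝ)+1-c*x ∈ Set.Icc (1/2:ℝ) 1 := by
              constructor <;> linarith
            rw [if_neg ht1, if_pos ht2]
            have heq : (p:ℝ) + 1 - c*x = 1/2 := by linarith
            rw [heq]; linarith

theorem stmt_0 (g f : ℕ → ℝ → ℝ)
    (hg₁ : ∀ x : ℝ, g 1 x =
      if x ∈ Set.Ico (0:ℝ) (1/2) then 2*x
      else if x ∈ Set.Icc (1/2 : ℝ) 1 then 2 - 2*x
      else 0)
    (hg : ∀ k : ℕ, 1 ≤ k → ∀ x : ℝ, g (k+1) x = g 1 (g k x))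
    (hf : ∀ k n : ℕ, n < 2^k →
      ∀ x ∈ Set.Ico ((n : ℝ)/2^k) (((n : ℝ)+1)/2^k),
        f k x = ((2*(n:ℝ)+1)/2^k) * x - ((n:ℝ)^2 + n)/2^(2*k))
    (hf1 : ∀ k : ℕ, f k 1 = 1) :
    ∀ k : ℕ, ∀ x ∈ Set.Icc (0:ℝ) 1,
      f k x = x - ∑ j ∈ Finset.Icc 1 k, (2:ℝ)^(-(2*(j:ℤ))) * g j x ∧
      |x^2 - f k x| ≤ (2:ℝ)^(-(2*(k:ℤ)) - 2) := by
  have hz : ∀ j : ℕ, (2:ℝ)^(-(2*(j:ℤ))) = 1/(2^j)^2 := by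
    intro j
    rw [show -(2*(j:ℤ)) = -((2*j : ℕ) : ℤ) by push_cast; ring, zpow_neg, zpow_natCast,
      one_div, two_mul, pow_add]
    rw [sq]
  have hz2 : ∀ k : ℕ, (2:ℝ)^(-(2*(k:ℤ)) - 2) = 1/(4*(2^k)^2) := by
    intro k
    rw [show -(2*(k:ℤ)) - 2 = -((2*k+2 : ℕ) : ℤ) by push_cast; ring, zpow_neg, zpow_natCast]
    rw [pow_add, two_mul, pow_add, one_div]
    ring_nf
  intro k x hx
  rcases eq_or_lt_of_le hx.2 with h1 | h1
  · -- x = 1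
    subst h1
    constructor
    · rw [hf1]
      have hs : ∀ j ∈ Finset.Icc 1 k, (2:ℝ)^(-(2*(j:ℤ))) * g j 1 = 0 := by
        intro j hj
        rw [gk_one g hg₁ hg j (Finset.mem_Icc.mp hj).1, mul_zero]
      rw [Finset.sum_congr rfl hs]
      simp
    · rw [hf1]
      simp only [one_pow, sub_self, abs_zero]
      positivity
  · -- x < 1, 0 ≤ x
    have hx0 : 0 ≤ x := hx.1
    -- floor-interval lemma
    have hfloor : ∀ m : ℕ, ∃ n : ℕ, n < 2^m ∧ (n:ℝ) ≤ 2^m * x ∧ 2^m * x < (n:ℝ) + 1 ∧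
        f m x = ((2*(n:ℝ)+1)/2^m) * x - ((n:ℝ)^2 + n)/2^(2*m) := by
      intro m
      set c : ℝ := 2^m with hc
      have hcpos : (0:ℝ) < c := by positivity
      refine ⟨⌊c*x⌋₊, ?_, ?_, ?_, ?_⟩
      · have : c*x < ((2^m : ℕ) : ℝ) := by push_cast; nlinarith
        exact (Nat.floor_lt (by positivity)).mpr this
      · exact Nat.floor_le (by positivity)
      · exact Nat.lt_floor_add_one _
      · refine hf m ⌊c*x⌋₊ ?_ x ?_
        · have : c*x < ((2^m : ℕ) : ℝ) := by push_cast; nlinarith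
          exact (Nat.floor_lt (by positivity)).mpr this
        · constructor
          · rw [div_le_iff₀ hcpos]
            have := Nat.floor_le (show (0:ℝ) ≤ c*x by positivity)
            linarith [this]
          · rw [lt_div_iff₀ hcpos]
            have := Nat.lt_floor_add_one (c*x)
            linarith [this]
    constructor
    · -- part 1: induction on k
      induction k with
      | zero =>
        obtain ⟨n, hn, _, _, hfv⟩ := hfloor 0
        interval_cases n
        rw [Finset.Icc_eq_empty (by omega), Finset.sum_empty, hfv]
        norm_num
      | succ k ih =>
        obtain ⟨m, hm, hm1, hm2, hfm⟩ := hfloor (k+1)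
        obtain ⟨n, hn, hn1, hn2, hfn⟩ := hfloor k
        set c : ℝ := 2^k with hc
        have hcpos : (0:ℝ) < c := by positivity
        have h2c : (2:ℝ)^(k+1) = 2*c := by rw [hc, pow_succ]; ring
        rw [h2c] at hm1 hm2
        -- m = 2n or 2n+1
        have hmn : m = 2*n ∨ m = 2*n + 1 := by
          have e1 : (2*n : ℝ) < (m:ℝ) + 1 := by linarith
          have e2 : (m:ℝ) < 2*(n:ℝ) + 2 := by linarith
          have e1' : 2*n < m + 1 := by exact_mod_cast (by push_cast; linarith : ((2*n : ℕ):ℝ) < ((m+1:ℕ):ℝ))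
          have e2' : m < 2*n + 2 := by exact_mod_cast (by push_cast; linarith : ((m : ℕ):ℝ) < ((2*n+2:ℕ):ℝ))
          omega
        have hgm := gform g hg₁ hg (k+1) (by omega) m hm x (by rw [h2c]; exact hm1) (by rw [h2c]; exact hm2)
        rw [h2c] at hgm
        have hsum : ∑ j ∈ Finset.Icc 1 (k+1), (2:ℝ)^(-(2*(j:ℤ))) * g j x
            = (∑ j ∈ Finset.Icc 1 k, (2:ℝ)^(-(2*(j:ℤ))) * g j x)
              + (2:ℝ)^(-(2*((k+1:ℕ):ℤ))) * g (k+1) x := by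
          exact Finset.sum_Icc_succ_top (by omega) _
        have h2k2 : (2:ℝ)^(2*(k+1)) = 4*c^2 := by
          rw [hc, ← pow_mul]
          rw [show 2*(k+1) = k*2+2 by ring, pow_add]
          ring
        have h2k : (2:ℝ)^(2*k) = c^2 := by rw [hc, ← pow_mul, mul_comm]
        have step : f (k+1) x = f k x - (2:ℝ)^(-(2*((k+1:ℕ):ℤ))) * g (k+1) x := by
          rw [hfm, hfn, hgm, hz (k+1), h2k2, h2k, h2c]
          rcases hmn with h | h
          · have hmr : (m:ℝ) = 2*n := by exact_mod_cast congrArg (Nat.cast : ℕ → ℝ) h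
            have hme : Even m := by rw [h]; exact even_two_mul n
            rw [if_pos hme, hmr]
            field_simp
            ring
          · have hmr : (m:ℝ) = 2*n+1 := by exact_mod_cast congrArg (Nat.cast : ℕ → ℝ) h
            have hmo : ¬ Even m := by rw [h]; simp [parity_simps]
            rw [if_neg hmo, hmr]
            field_simp
            ring
        rw [hsum, step, ih]
        push_cast
        ring
    · -- part 2: error bound
      obtain ⟨n, hn, hn1, hn2, hfv⟩ := hfloor k
      set c : ℝ := 2^k with hc
      have hcpos : (0:ℝ) < c := by positivity
      have h2k : (2:ℝ)^(2*k) = c^2 := by rw [hc, ← pow_mul, mul_comm]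
      rw [hz2 k, hfv, h2k]
      have key : x^2 - (((2*(n:ℝ)+1)/c) * x - ((n:ℝ)^2 + n)/c^2)
          = ((c*x - n) * (c*x - (n+1))) / c^2 := by
        field_simp
        ring
      rw [key, abs_div, abs_of_pos (by positivity : (0:ℝ) < c^2), div_le_div_iff₀ (by positivity) (by positivity)]
      have habs : |(c*x - n) * (c*x - (n+1))| ≤ 1/4 := by
        rw [abs_le]
        constructor
        · nlinarith [sq_nonneg (c*x - n - 1/2)]
        · nlinarith [sq_nonneg (c*x - n - 1/2)]
      nlinarith [sq_nonneg c]
end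

section
/- Let (E,d) be a metric space, L ∈ [0,∞), D ⊆ E, ∅ ≠ C ⊆ D, and let f : D → ℝ satisfy |f(x) − f(y)| ≤ L·d(x,y) for all x ∈ D, y ∈ C. Define F(x) = sup_{y ∈ C} (f(y) − L·d(x,y)). Then for all x ∈ D, |F(x) − f(x)| ≤ 2L·inf_{y ∈ C} d(x,y). -/
theorem stmt_14 {E : Type*} [MetricSpace E] (L : ℝ) (hL : 0 ≤ L)
    (D C : Set E) (hC : C.Nonempty) (hCD : C ⊆ D)
    (f : E → ℝ)
    (hf : ∀ x ∈ D, ∀ y ∈ C, |f x - f y| ≤ L * dist x y)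
    (F : E → ℝ)
    (hF : ∀ x : E, F x = ⨆ y : C, (f y - L * dist x (y : E))) :
    ∀ x ∈ D, |F x - f x| ≤ 2 * L * ⨅ y : C, dist x (y : E) := by
  intro x hx
  haveI : Nonempty C := hC.to_subtype
  have hub : ∀ y : C, f y - L * dist x (y : E) ≤ f x := by
    intro y
    have h := hf x hx y y.2
    have := abs_le.1 h
    linarith [this.1]
  have hFle : F x ≤ f x := by
    rw [hF x]; exact ciSup_le hub
  have hlow : ∀ y : C, f x - 2 * L * dist x (y : E) ≤ F x := by
    intro y
    have h := hf x hx y y.2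
    have h1 := (abs_le.1 h).2
    have hmem : f y - L * dist x (y : E) ≤ F x := by
      rw [hF x]
      exact le_ciSup ⟨f x, Set.forall_mem_range.2 hub⟩ y
    linarith
  have habs : |F x - f x| = f x - F x := by
    rw [abs_of_nonpos (by linarith)]; ring
  rw [habs, show (2 * L : ℝ) = (2 * L) by rfl,
    Real.mul_iInf_of_nonneg (by linarith : (0:ℝ) ≤ 2 * L)]
  exact le_ciInf fun y => by linarith [hlow y]
end
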